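/- Let H be an RKHS with bounded kernel, sup_x ‖φ(x)‖_H = c < ∞, and ν a probability measure with covariance operator C_ν. Let Ĉ = M⁻¹ Σ_{i=1}^M φ(x_i) ⊗ φ(x_i) for i.i.d. samples x_i ∼ ν. Then for every ε > 0, the probability that ‖C_ν − Ĉ‖_HS ≤ ε (Hilbert–Schmidt norm) is at least 1 − 2 exp(−M ε² / (8 c⁴)). -/

import Mathlib

open MeasureTheory ProbabilityTheory RealInnerProductSpace


lemma my_sinh_le_mul_cosh {s : ℝ} (hs : 0 ≤ s) : Real.sinh s ≤ s * Real.cosh s := by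
  have hF : ∀ t : ℝ, HasDerivAt (fun r => r * Real.cosh r - Real.sinh r) (t * Real.sinh t) t := by
    intro t
    have h := ((hasDerivAt_id t).mul (Real.hasDerivAt_cosh t)).sub (Real.hasDerivAt_sinh t)
    exact h.congr_deriv (by simp only [id, one_mul]; ring)
  have hmono : Monotone (fun r : ℝ => r * Real.cosh r - Real.sinh r) := by
    refine monotone_of_deriv_nonneg (fun t => (hF t).differentiableAt) (fun t => ?_)
    rw [(hF t).deriv]
    rcases le_or_gt 0 t with h | h
    · exact mul_nonneg h (by simpa using Real.sinh_le_sinh.2 h)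
    · have hsinh : Real.sinh t ≤ 0 := by simpa using Real.sinh_le_sinh.2 h.le
      nlinarith
  have := hmono hs
  simp only [Real.sinh_zero, Real.cosh_zero, mul_one, zero_mul, sub_zero, zero_sub, neg_zero] at this
  linarith [this]

lemma my_convexOn_cosh : ConvexOn ℝ Set.univ Real.cosh := by
  refine convexOn_of_deriv2_nonneg' convex_univ
    Real.differentiable_cosh.differentiableOn ?_ ?_
  · rw [Real.deriv_cosh]; exact Real.differentiable_sinh.differentiableOn
  · intro t _
    have : deriv^[2] Real.cosh = Real.cosh := by
      ext y
      simp [Function.iterate_succ, Real.deriv_cosh, Real.deriv_sinh]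
    rw [this]
    exact (Real.cosh_pos t).le

lemma my_convexOn_cosh_sqrt : ConvexOn ℝ (Set.Ici 0) (fun t => Real.cosh (Real.sqrt t)) := by
  have hIoi : interior (Set.Ici (0:ℝ)) = Set.Ioi 0 := interior_Ici
  refine convexOn_of_hasDerivWithinAt2_nonneg (convex_Ici 0)
    (f' := fun t => Real.sinh (Real.sqrt t) / (2 * Real.sqrt t))
    (f'' := fun t => (Real.sqrt t * Real.cosh (Real.sqrt t) - Real.sinh (Real.sqrt t)) /
      (4 * t * Real.sqrt t))
    (Real.continuous_cosh.comp Real.continuous_sqrt).continuousOn ?_ ?_ ?_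
  · intro t ht
    rw [hIoi] at ht
    have hst : Real.sqrt t ≠ 0 := ne_of_gt (Real.sqrt_pos.2 ht)
    have h := (Real.hasDerivAt_sqrt (ne_of_gt ht)).cosh
    have : Real.sinh (Real.sqrt t) * (1 / (2 * Real.sqrt t)) =
        Real.sinh (Real.sqrt t) / (2 * Real.sqrt t) := by ring
    rw [this] at h
    exact h.hasDerivWithinAt
  · intro t ht
    rw [hIoi] at ht
    have hts : 0 < Real.sqrt t := Real.sqrt_pos.2 ht
    have hst : Real.sqrt t ≠ 0 := ne_of_gt hts
    have h1 : HasDerivAt (fun r => Real.sinh (Real.sqrt r))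
        (Real.cosh (Real.sqrt t) * (1 / (2 * Real.sqrt t))) t :=
      (Real.hasDerivAt_sqrt (ne_of_gt ht)).sinh
    have h2 : HasDerivAt (fun r => 2 * Real.sqrt r) (2 * (1 / (2 * Real.sqrt t))) t :=
      (Real.hasDerivAt_sqrt (ne_of_gt ht)).const_mul 2
    have hden : 2 * Real.sqrt t ≠ 0 := by positivity
    have h := h1.div h2 hden
    have heq : (Real.cosh (Real.sqrt t) * (1 / (2 * Real.sqrt t)) * (2 * Real.sqrt t) -
        Real.sinh (Real.sqrt t) * (2 * (1 / (2 * Real.sqrt t)))) / (2 * Real.sqrt t) ^ 2 =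
        (Real.sqrt t * Real.cosh (Real.sqrt t) - Real.sinh (Real.sqrt t)) /
          (4 * t * Real.sqrt t) := by
      have hsq : Real.sqrt t ^ 2 = t := Real.sq_sqrt ht.le
      rw [← hsq]
      field_simp
      rw [Real.sqrt_sq hts.le]
      ring
    rw [heq] at h
    exact h.hasDerivWithinAt
  · intro t ht
    rw [hIoi] at ht
    have hts : 0 < Real.sqrt t := Real.sqrt_pos.2 ht
    have ht' : (0:ℝ) < t := ht
    apply div_nonneg
    · have := my_sinh_le_mul_cosh hts.le
      linarith
    · positivity

lemma my_pair_ineq {g : ℝ → ℝ} (hg : ConvexOn ℝ (Set.Ici 0) g) {x' x y y' : ℝ}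
    (h0 : 0 ≤ x') (h1 : x' ≤ x) (h2 : x ≤ y) (h3 : y ≤ y') (hsum : x + y = x' + y') :
    g x + g y ≤ g x' + g y' := by
  rcases eq_or_lt_of_le (h1.trans (h2.trans h3)) with heq | hlt
  · have hx : x = x' := le_antisymm (by linarith) h1
    have hy : y = y' := by linarith
    rw [hx, hy]
  · set θ : ℝ := (y' - x) / (y' - x') with hθ
    have hd : 0 < y' - x' := by linarith
    have hθ0 : 0 ≤ θ := div_nonneg (by linarith) hd.le
    have hθ1 : 0 ≤ 1 - θ := by
      have : θ ≤ 1 := by rw [hθ, div_le_one hd]; linarith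
      linarith
    have hmem' : x' ∈ Set.Ici (0:ℝ) := h0
    have hmem'' : y' ∈ Set.Ici (0:ℝ) := by simp only [Set.mem_Ici]; linarith
    have hxcomb : x = θ * x' + (1 - θ) * y' := by
      rw [hθ, div_mul_eq_mul_div, one_sub_div hd.ne', div_mul_eq_mul_div, ← add_div,
        eq_div_iff hd.ne']
      ring
    have hycomb : y = (1 - θ) * x' + θ * y' := by
      rw [hθ, one_sub_div hd.ne', div_mul_eq_mul_div, div_mul_eq_mul_div, ← add_div,
        eq_div_iff hd.ne']
      linear_combination (y' - x') * hsum
    have h1' := hg.2 hmem' hmem'' hθ0 hθ1 (by ring)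
    have h2' := hg.2 hmem' hmem'' hθ1 hθ0 (by ring)
    simp only [smul_eq_mul] at h1' h2'
    rw [hxcomb, hycomb]
    calc g (θ * x' + (1 - θ) * y') + g ((1 - θ) * x' + θ * y')
        ≤ (θ * g x' + (1 - θ) * g y') + ((1 - θ) * g x' + θ * g y') := add_le_add h1' h2'
      _ = g x' + g y' := by ring

lemma my_two_point_aux {a b p q : ℝ} (ha : 0 ≤ a) (hab : a ≤ b) (hbp : b ≤ p) (hq : 0 ≤ q)
    (hsum : a ^ 2 + b ^ 2 = p ^ 2 + q ^ 2) :
    Real.cosh a + Real.cosh b ≤ Real.cosh p + Real.cosh q := by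
  have hb : 0 ≤ b := ha.trans hab
  have hp : 0 ≤ p := hb.trans hbp
  have hq2 : q ^ 2 ≤ a ^ 2 := by nlinarith
  have hb2 : b ^ 2 ≤ p ^ 2 := by nlinarith
  have key := my_pair_ineq my_convexOn_cosh_sqrt (x' := q ^ 2) (x := a ^ 2) (y := b ^ 2)
    (y' := p ^ 2) (by positivity) hq2 (by nlinarith) hb2 (by linarith)
  simpa [Real.sqrt_sq ha, Real.sqrt_sq hb, Real.sqrt_sq hp, Real.sqrt_sq hq,
    add_comm] using key

lemma my_two_point {E : Type*} [NormedAddCommGroup E] [InnerProductSpace ℝ E] (u v : E) :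
    Real.cosh ‖u + v‖ + Real.cosh ‖u - v‖ ≤ 2 * Real.cosh ‖u‖ * Real.cosh ‖v‖ := by
  have hpar := parallelogram_law_with_norm ℝ u v
  have hsum : ‖u + v‖ ^ 2 + ‖u - v‖ ^ 2 = (‖u‖ + ‖v‖) ^ 2 + |‖u‖ - ‖v‖| ^ 2 := by
    rw [sq_abs]
    nlinarith [hpar]
  have hq : 0 ≤ |‖u‖ - ‖v‖| := abs_nonneg _
  have hfin : Real.cosh (‖u‖ + ‖v‖) + Real.cosh |‖u‖ - ‖v‖| =
      2 * Real.cosh ‖u‖ * Real.cosh ‖v‖ := by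
    rw [Real.cosh_abs, Real.cosh_add, Real.cosh_sub]
    ring
  rcases le_total ‖u + v‖ ‖u - v‖ with h | h
  · have := my_two_point_aux (norm_nonneg (u + v)) h
      ((norm_sub_le u v)) hq hsum
    linarith [hfin, this]
  · have hsum' : ‖u - v‖ ^ 2 + ‖u + v‖ ^ 2 = (‖u‖ + ‖v‖) ^ 2 + |‖u‖ - ‖v‖| ^ 2 := by
      linarith [hsum]
    have := my_two_point_aux (norm_nonneg (u - v)) h (norm_add_le u v) hq hsum'
    linarith [hfin, this]

lemma my_cosh_integrable {α : Type*} [MeasurableSpace α] (μ : Measure α) [IsFiniteMeasure μ]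
    {f : α → ℝ} (hsm : AEStronglyMeasurable f μ) {R : ℝ} (hR : ∀ a, |f a| ≤ R) :
    Integrable (fun a => Real.cosh (f a)) μ := by
  refine ⟨Real.continuous_cosh.comp_aestronglyMeasurable hsm,
    HasFiniteIntegral.of_bounded (C := Real.cosh R) (Filter.Eventually.of_forall fun a => ?_)⟩
  rw [Real.norm_eq_abs, abs_of_nonneg (Real.cosh_pos _).le]
  exact Real.cosh_le_cosh.2 ((abs_abs (f a)) ▸ ((hR a).trans (le_abs_self R)))

lemma my_convexOn_cosh_norm {E : Type*} [NormedAddCommGroup E] [InnerProductSpace ℝ E]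
    (l : ℝ) (hl : 0 ≤ l) (w : E) :
    ConvexOn ℝ Set.univ (fun z : E => Real.cosh (l * ‖w - z‖)) := by
  refine ⟨convex_univ, fun z₁ _ z₂ _ a b ha hb hab => ?_⟩
  have hnorm : ‖w - (a • z₁ + b • z₂)‖ ≤ a * ‖w - z₁‖ + b * ‖w - z₂‖ := by
    have : w - (a • z₁ + b • z₂) = a • (w - z₁) + b • (w - z₂) := by
      have : a • w + b • w = w := by rw [← add_smul, hab, one_smul]
      rw [smul_sub, smul_sub]
      rw [show a • w - a • z₁ + (b • w - b • z₂) = (a • w + b • w) - (a • z₁ + b • z₂) by abel,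
        this]
    rw [this]
    calc ‖a • (w - z₁) + b • (w - z₂)‖ ≤ ‖a • (w - z₁)‖ + ‖b • (w - z₂)‖ := norm_add_le _ _
      _ = a * ‖w - z₁‖ + b * ‖w - z₂‖ := by
          rw [norm_smul, norm_smul, Real.norm_eq_abs, Real.norm_eq_abs,
            abs_of_nonneg ha, abs_of_nonneg hb]
  have step1 : Real.cosh (l * ‖w - (a • z₁ + b • z₂)‖) ≤
      Real.cosh (a * (l * ‖w - z₁‖) + b * (l * ‖w - z₂‖)) := by
    refine Real.cosh_le_cosh.2 ?_
    rw [abs_of_nonneg (by positivity), abs_of_nonneg (by positivity)]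
    calc l * ‖w - (a • z₁ + b • z₂)‖ ≤ l * (a * ‖w - z₁‖ + b * ‖w - z₂‖) :=
          mul_le_mul_of_nonneg_left hnorm hl
      _ = a * (l * ‖w - z₁‖) + b * (l * ‖w - z₂‖) := by ring
  have step2 := my_convexOn_cosh.2 (Set.mem_univ (l * ‖w - z₁‖)) (Set.mem_univ (l * ‖w - z₂‖))
    ha hb hab
  simp only [smul_eq_mul] at step2 ⊢
  exact step1.trans step2

lemma my_step {X : Type*} [MeasurableSpace X] {E : Type*} [NormedAddCommGroup E]
    [InnerProductSpace ℝ E] [CompleteSpace E]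
    (ν : Measure X) [IsProbabilityMeasure ν] {Ψ : X → E} (hΨsm : StronglyMeasurable Ψ)
    {b : ℝ} (hb : ∀ x, ‖Ψ x‖ ≤ b) (hΨint : Integrable Ψ ν)
    {l : ℝ} (hl : 0 ≤ l) (u : E) :
    ∫ x, Real.cosh (l * ‖u + (Ψ x - ∫ z, Ψ z ∂ν)‖) ∂ν ≤
      Real.cosh (l * ‖u‖) * Real.cosh (l * (2 * b)) := by
  have hb0 : 0 ≤ b := by
    have hX : Nonempty X := by
      by_contra h
      rw [not_nonempty_iff] at h
      have h1 : ν Set.univ = 1 := measure_univ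
      rw [Set.univ_eq_empty_iff.2 h, measure_empty] at h1
      exact zero_ne_one h1
    exact (norm_nonneg _).trans (hb (Classical.arbitrary X))
  set C : E := ∫ z, Ψ z ∂ν with hCdef
  have hCnorm : ‖C‖ ≤ b := by
    have := norm_integral_le_of_norm_le_const (μ := ν) (C := b)
      (Filter.Eventually.of_forall hb)
    simpa using this
  set H : X × X → ℝ := fun p => Real.cosh (l * ‖(u + Ψ p.1) - Ψ p.2‖) with hHdef
  have hHsm : AEStronglyMeasurable H (ν.prod ν) :=
    (Real.continuous_cosh.comp_stronglyMeasurable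
      ((((hΨsm.comp_measurable measurable_fst).const_add u).sub
        (hΨsm.comp_measurable measurable_snd)).norm.const_mul l)).aestronglyMeasurable
  have hHbd : ∀ p : X × X, |l * ‖(u + Ψ p.1) - Ψ p.2‖| ≤ l * (‖u‖ + 2 * b) := by
    intro p
    rw [abs_of_nonneg (by positivity)]
    refine mul_le_mul_of_nonneg_left ?_ hl
    calc ‖(u + Ψ p.1) - Ψ p.2‖ ≤ ‖u + Ψ p.1‖ + ‖Ψ p.2‖ := norm_sub_le _ _
      _ ≤ (‖u‖ + ‖Ψ p.1‖) + ‖Ψ p.2‖ := by linarith [norm_add_le u (Ψ p.1)]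
      _ ≤ ‖u‖ + 2 * b := by linarith [hb p.1, hb p.2]
  have hHint : Integrable H (ν.prod ν) :=
    my_cosh_integrable _ ((((hΨsm.comp_measurable measurable_fst).const_add u).sub
        (hΨsm.comp_measurable measurable_snd)).norm.const_mul l).aestronglyMeasurable hHbd
  have hHswapint : Integrable (fun p : X × X => H (p.2, p.1)) (ν.prod ν) := by
    refine my_cosh_integrable _ ((((hΨsm.comp_measurable measurable_snd).const_add u).sub
        (hΨsm.comp_measurable measurable_fst)).norm.const_mul l).aestronglyMeasurable
      (R := l * (‖u‖ + 2 * b)) (fun p => ?_)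
    exact hHbd (p.2, p.1)
  -- Jensen pointwise
  have jensen : ∀ x : X, Real.cosh (l * ‖u + (Ψ x - C)‖) ≤
      ∫ x', Real.cosh (l * ‖(u + Ψ x) - Ψ x'‖) ∂ν := by
    intro x
    set w : E := u + Ψ x with hw
    have hconv := my_convexOn_cosh_norm l hl w
    have hcont : Continuous (fun z : E => Real.cosh (l * ‖w - z‖)) :=
      Real.continuous_cosh.comp (continuous_const.mul ((continuous_const.sub continuous_id).norm))
    have hgint : Integrable (fun x' => Real.cosh (l * ‖w - Ψ x'‖)) ν := by
      refine my_cosh_integrable _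
        ((stronglyMeasurable_const.sub hΨsm).norm.const_mul l).aestronglyMeasurable
        (R := l * (‖w‖ + b)) (fun a => ?_)
      rw [abs_of_nonneg (by positivity)]
      refine mul_le_mul_of_nonneg_left ?_ hl
      calc ‖w - Ψ a‖ ≤ ‖w‖ + ‖Ψ a‖ := norm_sub_le _ _
        _ ≤ ‖w‖ + b := by linarith [hb a]
    have happ := hconv.map_integral_le hcont.continuousOn isClosed_univ
      (Filter.Eventually.of_forall fun _ => Set.mem_univ _) hΨint
      (by exact hgint)
    have he : u + (Ψ x - C) = w - C := by rw [hw]; abel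
    rw [he]
    exact happ
  have hint1 : Integrable (fun x => Real.cosh (l * ‖u + (Ψ x - C)‖)) ν := by
    refine my_cosh_integrable _
      (((hΨsm.sub stronglyMeasurable_const).const_add u).norm.const_mul l).aestronglyMeasurable
      (R := l * (‖u‖ + 2 * b)) (fun a => ?_)
    rw [abs_of_nonneg (by positivity)]
    refine mul_le_mul_of_nonneg_left ?_ hl
    calc ‖u + (Ψ a - C)‖ ≤ ‖u‖ + ‖Ψ a - C‖ := norm_add_le _ _
      _ ≤ ‖u‖ + (‖Ψ a‖ + ‖C‖) := by linarith [norm_sub_le (Ψ a) C]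
      _ ≤ ‖u‖ + 2 * b := by linarith [hb a]
  have hint2 : Integrable (fun x => ∫ x', H (x, x') ∂ν) ν := hHint.integral_prod_left
  have step1 : ∫ x, Real.cosh (l * ‖u + (Ψ x - C)‖) ∂ν ≤ ∫ p, H p ∂(ν.prod ν) := by
    rw [integral_prod _ hHint]
    exact integral_mono hint1 hint2 jensen
  -- symmetrization
  have hswap : ∫ p, H (p.2, p.1) ∂(ν.prod ν) = ∫ p, H p ∂(ν.prod ν) := by
    rw [integral_prod _ hHswapint, integral_prod _ hHint]
    exact integral_integral_swap (f := fun x x' => H (x', x)) (by exact hHswapint)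
  have pointwise : ∀ p : X × X, H p + H (p.2, p.1) ≤
      2 * Real.cosh (l * ‖u‖) * Real.cosh (l * (2 * b)) := by
    intro p
    set D : E := Ψ p.1 - Ψ p.2 with hD
    have e1 : (u + Ψ p.1) - Ψ p.2 = u + D := by rw [hD]; abel
    have e2 : (u + Ψ p.2) - Ψ p.1 = u - D := by rw [hD]; abel
    have h1 : l * ‖(u + Ψ p.1) - Ψ p.2‖ = ‖l • u + l • D‖ := by
      rw [e1, ← smul_add, norm_smul, Real.norm_eq_abs, abs_of_nonneg hl]
    have h2 : l * ‖(u + Ψ p.2) - Ψ p.1‖ = ‖l • u - l • D‖ := by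
      rw [e2, ← smul_sub, norm_smul, Real.norm_eq_abs, abs_of_nonneg hl]
    have htp := my_two_point (l • u) (l • D)
    have hDb : ‖D‖ ≤ 2 * b := by
      calc ‖D‖ ≤ ‖Ψ p.1‖ + ‖Ψ p.2‖ := norm_sub_le _ _
        _ ≤ 2 * b := by linarith [hb p.1, hb p.2]
    have hcosh1 : Real.cosh ‖l • u‖ = Real.cosh (l * ‖u‖) := by
      rw [norm_smul, Real.norm_eq_abs, abs_of_nonneg hl]
    have hcosh2 : Real.cosh ‖l • D‖ ≤ Real.cosh (l * (2 * b)) := by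
      refine Real.cosh_le_cosh.2 ?_
      rw [abs_of_nonneg (norm_nonneg _), abs_of_nonneg (by positivity), norm_smul,
        Real.norm_eq_abs, abs_of_nonneg hl]
      exact mul_le_mul_of_nonneg_left hDb hl
    calc H p + H (p.2, p.1)
        = Real.cosh ‖l • u + l • D‖ + Real.cosh ‖l • u - l • D‖ := by
          rw [hHdef]; simp only []; rw [h1, h2]
      _ ≤ 2 * Real.cosh ‖l • u‖ * Real.cosh ‖l • D‖ := htp
      _ ≤ 2 * Real.cosh (l * ‖u‖) * Real.cosh (l * (2 * b)) := by
          rw [hcosh1]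
          refine mul_le_mul_of_nonneg_left hcosh2 ?_
          positivity
  have step2 : ∫ p, H p ∂(ν.prod ν) ≤ Real.cosh (l * ‖u‖) * Real.cosh (l * (2 * b)) := by
    have havg : ∫ p, H p ∂(ν.prod ν) =
        ∫ p, (H p + H (p.2, p.1)) / 2 ∂(ν.prod ν) := by
      rw [integral_div, integral_add hHint hHswapint, hswap]
      ring
    rw [havg]
    have hmono := integral_mono ((hHint.add hHswapint).div_const 2)
      (integrable_const (Real.cosh (l * ‖u‖) * Real.cosh (l * (2 * b))))
      (fun p => by simp only [Pi.add_apply]; linarith [pointwise p])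
    calc ∫ p, (H p + H (p.2, p.1)) / 2 ∂(ν.prod ν)
        ≤ ∫ _p, Real.cosh (l * ‖u‖) * Real.cosh (l * (2 * b)) ∂(ν.prod ν) := hmono
      _ = Real.cosh (l * ‖u‖) * Real.cosh (l * (2 * b)) := by simp
  exact step1.trans step2

lemma my_key {X : Type*} [MeasurableSpace X] {E : Type*} [NormedAddCommGroup E]
    [InnerProductSpace ℝ E] [CompleteSpace E]
    (ν : Measure X) [IsProbabilityMeasure ν] {Ψ : X → E} (hΨsm : StronglyMeasurable Ψ)
    {b : ℝ} (hb : ∀ x, ‖Ψ x‖ ≤ b) (hΨint : Integrable Ψ ν)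
    {l : ℝ} (hl : 0 ≤ l) :
    ∀ n : ℕ, ∫ y, Real.cosh (l * ‖∑ i : Fin n, (Ψ (y i) - ∫ z, Ψ z ∂ν)‖)
        ∂(Measure.pi fun _ : Fin n => ν) ≤ Real.cosh (l * (2 * b)) ^ n := by
  have hb0 : 0 ≤ b := by
    have hX : Nonempty X := by
      by_contra h
      rw [not_nonempty_iff] at h
      have h1 : ν Set.univ = 1 := measure_univ
      rw [Set.univ_eq_empty_iff.2 h, measure_empty] at h1
      exact zero_ne_one h1
    exact (norm_nonneg _).trans (hb (Classical.arbitrary X))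
  set C : E := ∫ z, Ψ z ∂ν with hCdef
  have hCnorm : ‖C‖ ≤ b := by
    have := norm_integral_le_of_norm_le_const (μ := ν) (C := b)
      (Filter.Eventually.of_forall hb)
    simpa using this
  -- general facts about the partial-sum functions
  have hSsm : ∀ n : ℕ, StronglyMeasurable (fun y : Fin n → X => ∑ i, (Ψ (y i) - C)) := by
    intro n
    exact Finset.stronglyMeasurable_fun_sum _ fun i _ =>
      (hΨsm.comp_measurable (measurable_pi_apply i)).sub stronglyMeasurable_const
  have hSbd : ∀ (n : ℕ) (y : Fin n → X), ‖∑ i, (Ψ (y i) - C)‖ ≤ n * (2 * b) := by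
    intro n y
    calc ‖∑ i, (Ψ (y i) - C)‖ ≤ ∑ i : Fin n, ‖Ψ (y i) - C‖ := norm_sum_le _ _
      _ ≤ ∑ _i : Fin n, (2 * b) := by
          refine Finset.sum_le_sum fun i _ => ?_
          calc ‖Ψ (y i) - C‖ ≤ ‖Ψ (y i)‖ + ‖C‖ := norm_sub_le _ _
            _ ≤ 2 * b := by linarith [hb (y i)]
      _ = n * (2 * b) := by simp [mul_comm]
  intro n
  induction n with
  | zero =>
      simp
  | succ n ih =>
      set K := Real.cosh (l * (2 * b)) with hK
      have hK1 : 1 ≤ K := Real.one_le_cosh _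
      set e := MeasurableEquiv.piFinSuccAbove (fun _ : Fin (n + 1) => X) 0 with he
      have hmp : MeasurePreserving e (Measure.pi fun _ : Fin (n + 1) => ν)
          (ν.prod (Measure.pi fun _ : Fin n => ν)) :=
        measurePreserving_piFinSuccAbove (fun _ : Fin (n + 1) => ν) 0
      set F : (Fin (n + 1) → X) → ℝ :=
        fun y => Real.cosh (l * ‖∑ i, (Ψ (y i) - C)‖) with hF
      set G : X × (Fin n → X) → ℝ := fun z => F (e.symm z) with hG
      -- explicit formula for G
      have hGeq : ∀ (x : X) (z : Fin n → X),
          G (x, z) = Real.cosh (l * ‖(Ψ x - C) + ∑ i, (Ψ (z i) - C)‖) := by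
        intro x z
        have hy : e.symm (x, z) = Fin.insertNth 0 x z := rfl
        have hsum : ∑ i : Fin (n + 1), (Ψ (Fin.insertNth (α := fun _ => X) 0 x z i) - C) =
            (Ψ x - C) + ∑ i : Fin n, (Ψ (z i) - C) := by
          rw [Fin.sum_univ_succ]
          have h0 : Fin.insertNth (α := fun _ => X) 0 x z 0 = x := Fin.insertNth_apply_same (α := fun _ => X) 0 x z
          have hs : ∀ i : Fin n, Fin.insertNth (α := fun _ => X) 0 x z i.succ = z i := by
            intro i
            have hsucc : (i : Fin n).succ = (0 : Fin (n + 1)).succAbove i := by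
              simp [Fin.succAbove_zero]
            rw [hsucc]; exact Fin.insertNth_apply_succAbove (α := fun _ => X) 0 x z i
          rw [h0]
          simp [hs]
        rw [hG]
        simp only [hy, hF]
        rw [hsum]
      -- integrability of G on the product
      have hGsm : StronglyMeasurable G := by
        have : StronglyMeasurable F :=
          Real.continuous_cosh.comp_stronglyMeasurable ((hSsm (n + 1)).norm.const_mul l)
        exact this.comp_measurable e.symm.measurable
      have hGbd : ∀ z, |(fun p : X × (Fin n → X) =>
          l * ‖∑ i, (Ψ ((e.symm p) i) - C)‖) z| ≤ l * ((n + 1) * (2 * b)) := by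
        intro z
        rw [abs_of_nonneg (by positivity)]
        refine mul_le_mul_of_nonneg_left ?_ hl
        have := hSbd (n + 1) (e.symm z)
        push_cast at this ⊢
        linarith
      have hGint : Integrable G (ν.prod (Measure.pi fun _ : Fin n => ν)) := by
        refine my_cosh_integrable _ ?_ hGbd
        exact (((hSsm (n + 1)).comp_measurable e.symm.measurable).norm.const_mul
          l).aestronglyMeasurable
      -- change of variables
      have hchange : ∫ y, F y ∂(Measure.pi fun _ : Fin (n + 1) => ν) =
          ∫ z, G z ∂(ν.prod (Measure.pi fun _ : Fin n => ν)) := by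
        rw [← hmp.integral_comp e.measurableEmbedding G]
        refine integral_congr_ae (Filter.Eventually.of_forall fun y => ?_)
        rw [hG]
        simp
      rw [hchange, integral_prod_symm _ hGint]
      -- apply the step lemma for all z, then the induction hypothesis
      have hstep : ∀ z : Fin n → X,
          ∫ x, G (x, z) ∂ν ≤ Real.cosh (l * ‖∑ i, (Ψ (z i) - C)‖) * K := by
        intro z
        have := my_step ν hΨsm hb hΨint hl (∑ i, (Ψ (z i) - C))
        rw [← hCdef] at this
        calc ∫ x, G (x, z) ∂ν
            = ∫ x, Real.cosh (l * ‖(∑ i, (Ψ (z i) - C)) + (Ψ x - C)‖) ∂ν := by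
              refine integral_congr_ae (Filter.Eventually.of_forall fun x => ?_)
              show G (x, z) = _
              rw [hGeq x z, add_comm (Ψ x - C)]
          _ ≤ Real.cosh (l * ‖∑ i, (Ψ (z i) - C)‖) * K := this
      have hint_lhs : Integrable (fun z => ∫ x, G (x, z) ∂ν)
          (Measure.pi fun _ : Fin n => ν) := hGint.integral_prod_right
      have hint_rhs : Integrable (fun z : Fin n → X =>
          Real.cosh (l * ‖∑ i, (Ψ (z i) - C)‖) * K) (Measure.pi fun _ : Fin n => ν) := by
        refine Integrable.mul_const ?_ K
        refine my_cosh_integrable _ ((hSsm n).norm.const_mul l).aestronglyMeasurable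
          (R := l * (n * (2 * b))) (fun z => ?_)
        rw [abs_of_nonneg (by positivity)]
        exact mul_le_mul_of_nonneg_left (hSbd n z) hl
      calc ∫ z, (∫ x, G (x, z) ∂ν) ∂(Measure.pi fun _ : Fin n => ν)
          ≤ ∫ z, Real.cosh (l * ‖∑ i, (Ψ (z i) - C)‖) * K
              ∂(Measure.pi fun _ : Fin n => ν) := integral_mono hint_lhs hint_rhs hstep
        _ = (∫ z, Real.cosh (l * ‖∑ i, (Ψ (z i) - C)‖)
              ∂(Measure.pi fun _ : Fin n => ν)) * K := by rw [integral_mul_const]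
        _ ≤ K ^ n * K := by
            refine mul_le_mul_of_nonneg_right ?_ (by positivity)
            exact ih
        _ = K ^ (n + 1) := by ring


/-- Hilbert-space Hoeffding bound for the empirical covariance operator. The rank-one
operators `φ(x) ⊗ φ(x)` are viewed as elements `Φ x` of the Hilbert space `E` of
Hilbert–Schmidt operators on `H`, with `‖Φ x‖_HS = ‖φ x‖² ≤ c²`. For i.i.d. samples
`x_1, …, x_M ∼ ν`, the empirical covariance `Ĉ = M⁻¹ ∑ Φ(x_i)` satisfies
`P(‖C_ν − Ĉ‖_HS ≤ ε) ≥ 1 − 2 exp(−M ε²/(8c⁴))` for every `ε > 0`,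
where `C_ν = ∫ Φ dν` is the covariance operator. -/
theorem covariance_operator_concentration
    {X : Type*} [MeasurableSpace X]
    {H : Type*} [NormedAddCommGroup H] [InnerProductSpace ℝ H] [CompleteSpace H]
    {E : Type*} [NormedAddCommGroup E] [InnerProductSpace ℝ E] [CompleteSpace E]
    [MeasurableSpace E] [BorelSpace E]
    (φ : X → H) (Φ : X → E) (hΦmeas : Measurable Φ)
    (hHS : ∀ x : X, ‖Φ x‖ = ‖φ x‖ ^ 2)
    (c : ℝ) (hc : ∀ x : X, ‖φ x‖ ≤ c)
    (ν : Measure X) [IsProbabilityMeasure ν]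
    {Ω : Type*} [MeasurableSpace Ω] (μ : Measure Ω) [IsProbabilityMeasure μ]
    (M : ℕ) (hM : 0 < M)
    (x : Fin M → Ω → X) (hmeas : ∀ i, Measurable (x i))
    (hdist : ∀ i, Measure.map (x i) μ = ν)
    (hindep : iIndepFun x μ)
    (hint : Integrable Φ ν) (ε : ℝ) (hε : 0 < ε) :
    ENNReal.ofReal (1 - 2 * Real.exp (-(M * ε ^ 2) / (8 * c ^ 4))) ≤
      μ {ω | ‖(∫ y, Φ y ∂ν) - (M : ℝ)⁻¹ • ∑ i, Φ (x i ω)‖ ≤ ε} := by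
  have hX : Nonempty X := by
    by_contra h
    rw [not_nonempty_iff] at h
    have h1 : ν Set.univ = 1 := measure_univ
    rw [Set.univ_eq_empty_iff.2 h, measure_empty] at h1
    exact zero_ne_one h1
  rcases le_or_gt c 0 with hc0 | hcpos
  · -- degenerate case `c = 0`
    have hceq : c = 0 := le_antisymm hc0 ((norm_nonneg _).trans (hc (Classical.arbitrary X)))
    rw [hceq]
    have h8 : (8:ℝ) * (0:ℝ) ^ 4 = 0 := by norm_num
    rw [h8, div_zero, Real.exp_zero]
    have : ENNReal.ofReal (1 - 2 * 1) = 0 := ENNReal.ofReal_eq_zero.2 (by norm_num)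
    rw [this]
    exact zero_le
  -- main case `0 < c`
  obtain ⟨Φ', hΦ'sm, hΦ'ae⟩ := hint.1
  set s0 : Set X := {z | ‖Φ' z‖ ≤ c ^ 2} with hs0
  have hs0m : MeasurableSet s0 := measurableSet_le hΦ'sm.norm.measurable measurable_const
  set Ψ : X → E := s0.indicator Φ' with hΨdef
  have hΨsm : StronglyMeasurable Ψ := hΦ'sm.indicator hs0m
  have hΦbd : ∀ z, ‖Φ z‖ ≤ c ^ 2 := fun z => by
    rw [hHS z]; exact pow_le_pow_left₀ (norm_nonneg _) (hc z) 2
  have hae : Φ =ᵐ[ν] Ψ := by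
    filter_upwards [hΦ'ae] with z hz
    have hmem : z ∈ s0 := by
      rw [hs0]; simp only [Set.mem_setOf_eq]; rw [← hz]; exact hΦbd z
    rw [hΨdef, Set.indicator_of_mem hmem]
    exact hz
  have hΨbd : ∀ z, ‖Ψ z‖ ≤ c ^ 2 := fun z => by
    rw [hΨdef]
    by_cases h : z ∈ s0
    · rw [Set.indicator_of_mem h]; exact h
    · rw [Set.indicator_of_notMem h]; simp; positivity
  have hΨint : Integrable Ψ ν := hint.congr hae
  have hCeq : (∫ y, Φ y ∂ν) = ∫ y, Ψ y ∂ν := integral_congr_ae hae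
  set C : E := ∫ y, Ψ y ∂ν with hCdef
  have hCnorm : ‖C‖ ≤ c ^ 2 := by
    have := norm_integral_le_of_norm_le_const (μ := ν) (C := c ^ 2)
      (Filter.Eventually.of_forall hΨbd)
    simpa using this
  -- replace `Φ` by `Ψ` in the event
  have haeω : ∀ᵐ ω ∂μ, ∀ i, Φ (x i ω) = Ψ (x i ω) := by
    rw [ae_all_iff]
    intro i
    have h := hae
    rw [← hdist i] at h
    exact ae_eq_comp (hmeas i).aemeasurable h
  have hμeq : μ {ω | ‖(∫ y, Φ y ∂ν) - (M : ℝ)⁻¹ • ∑ i, Φ (x i ω)‖ ≤ ε} =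
      μ {ω | ‖C - (M : ℝ)⁻¹ • ∑ i, Ψ (x i ω)‖ ≤ ε} := by
    refine measure_congr (Filter.eventuallyEq_set.2 ?_)
    filter_upwards [haeω] with ω hω
    have hsum : (∑ i, Φ (x i ω)) = ∑ i, Ψ (x i ω) :=
      Finset.sum_congr rfl fun i _ => hω i
    simp only [Set.mem_setOf_eq, hCeq, hsum]
  rw [hμeq]
  -- transfer to the product space
  set P : Measure (Fin M → X) := Measure.pi (fun _ : Fin M => ν) with hPdef
  have hT : Measurable (fun ω (i : Fin M) => x i ω) := measurable_pi_lambda _ hmeas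
  have hmap : μ.map (fun ω (i : Fin M) => x i ω) = P := by
    rw [hPdef]
    refine (Measure.pi_eq fun s hs => ?_).symm
    rw [Measure.map_apply hT (MeasurableSet.univ_pi hs)]
    have hpre : (fun ω (i : Fin M) => x i ω) ⁻¹' (Set.pi Set.univ s) =
        ⋂ i ∈ Finset.univ, x i ⁻¹' s i := by
      ext ω; simp [Set.mem_pi]
    rw [hpre, hindep.measure_inter_preimage_eq_mul Finset.univ (fun i _ => hs i)]
    exact Finset.prod_congr rfl fun i _ => by
      rw [← hdist i]; exact (Measure.map_apply (hmeas i) (hs i)).symm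
  -- the centered sum
  set fS : (Fin M → X) → E := fun y => ∑ i, (Ψ (y i) - C) with hfSdef
  have hfSsm : StronglyMeasurable fS :=
    Finset.stronglyMeasurable_fun_sum _ fun i _ =>
      (hΨsm.comp_measurable (measurable_pi_apply i)).sub stronglyMeasurable_const
  have hfSbd : ∀ y, ‖fS y‖ ≤ M * (2 * c ^ 2) := by
    intro y
    calc ‖fS y‖ ≤ ∑ i : Fin M, ‖Ψ (y i) - C‖ := norm_sum_le _ _
      _ ≤ ∑ _i : Fin M, (2 * c ^ 2) := by
          refine Finset.sum_le_sum fun i _ => ?_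
          calc ‖Ψ (y i) - C‖ ≤ ‖Ψ (y i)‖ + ‖C‖ := norm_sub_le _ _
            _ ≤ 2 * c ^ 2 := by linarith [hΨbd (y i)]
      _ = M * (2 * c ^ 2) := by simp [mul_comm]
  have hnorm_eq : ∀ y : Fin M → X,
      ‖C - (M : ℝ)⁻¹ • ∑ i, Ψ (y i)‖ = (M : ℝ)⁻¹ * ‖fS y‖ := by
    intro y
    have hMne : ((M : ℝ)) ≠ 0 := Nat.cast_ne_zero.2 hM.ne'
    have h1 : C - (M : ℝ)⁻¹ • ∑ i, Ψ (y i) = -((M : ℝ)⁻¹ • fS y) := by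
      show C - (M : ℝ)⁻¹ • ∑ i, Ψ (y i) = -((M : ℝ)⁻¹ • ∑ i, (Ψ (y i) - C))
      have hsum : ∑ i, (Ψ (y i) - C) = (∑ i, Ψ (y i)) - M • C := by
        rw [Finset.sum_sub_distrib]; congr 1; simp
      rw [hsum, smul_sub]
      have h2 : (M : ℝ)⁻¹ • (M • C) = C := by
        rw [← Nat.cast_smul_eq_nsmul ℝ, smul_smul, inv_mul_cancel₀ hMne, one_smul]
      rw [h2]
      abel
    rw [h1, norm_neg, norm_smul, Real.norm_eq_abs, abs_of_nonneg (by positivity)]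
  -- the bad event
  set B : Set (Fin M → X) := {y | ε < ‖C - (M : ℝ)⁻¹ • ∑ i, Ψ (y i)‖} with hBdef
  have hBm : MeasurableSet B := by
    have hsm2 : StronglyMeasurable (fun y : Fin M → X =>
        ‖C - (M : ℝ)⁻¹ • ∑ i, Ψ (y i)‖) :=
      (stronglyMeasurable_const.sub
        ((Finset.stronglyMeasurable_fun_sum _ fun i _ =>
          hΨsm.comp_measurable (measurable_pi_apply i)).const_smul ((M : ℝ)⁻¹))).norm
    exact measurableSet_lt measurable_const hsm2.measurable
  have hμB : μ {ω | ε < ‖C - (M : ℝ)⁻¹ • ∑ i, Ψ (x i ω)‖} = P B := by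
    rw [← hmap, Measure.map_apply hT hBm]
    rfl
  -- parameters
  set l : ℝ := ε / (4 * c ^ 4) with hldef
  have hl : 0 < l := by rw [hldef]; positivity
  set K : ℝ := Real.cosh (l * (2 * c ^ 2)) with hKdef
  have hkey : ∫ y, Real.cosh (l * ‖fS y‖) ∂P ≤ K ^ M := by
    have h := my_key ν hΨsm hΨbd hΨint hl.le M
    rw [← hCdef] at h
    exact h
  -- Markov inequality
  set a : ℝ := Real.cosh (l * (M * ε)) with hadef
  have ha_pos : 0 < a := Real.cosh_pos _
  have hBsub : B ⊆ {y | a ≤ Real.cosh (l * ‖fS y‖)} := by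
    intro y hy
    have hy' : ε < (M : ℝ)⁻¹ * ‖fS y‖ := by
      rw [← hnorm_eq y]; exact hy
    have hMpos : (0 : ℝ) < M := by exact_mod_cast hM
    have hMeps : (M : ℝ) * ε < ‖fS y‖ := by
      have := mul_lt_mul_of_pos_left hy' hMpos
      rwa [← mul_assoc, mul_inv_cancel₀ hMpos.ne', one_mul] at this
    refine Real.cosh_le_cosh.2 ?_
    rw [abs_of_nonneg (by positivity), abs_of_nonneg (by positivity)]
    exact mul_le_mul_of_nonneg_left hMeps.le hl.le
  have hfint : Integrable (fun y => Real.cosh (l * ‖fS y‖)) P := by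
    refine my_cosh_integrable _ ((hfSsm.norm.const_mul l).aestronglyMeasurable)
      (R := l * (M * (2 * c ^ 2))) (fun y => ?_)
    rw [abs_of_nonneg (by positivity)]
    exact mul_le_mul_of_nonneg_left (hfSbd y) hl.le
  have hmarkov := mul_meas_ge_le_integral_of_nonneg
    (Filter.Eventually.of_forall fun y => (Real.cosh_pos _).le) hfint a
  have htoReal : (P B).toReal ≤ (P {y | a ≤ Real.cosh (l * ‖fS y‖)}).toReal :=
    ENNReal.toReal_mono (measure_ne_top _ _) (measure_mono hBsub)
  have hPBle : (P B).toReal ≤ K ^ M / a := by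
    rw [le_div_iff₀ ha_pos]
    calc (P B).toReal * a = a * (P B).toReal := mul_comm _ _
      _ ≤ a * (P {y | a ≤ Real.cosh (l * ‖fS y‖)}).toReal :=
          mul_le_mul_of_nonneg_left htoReal ha_pos.le
      _ ≤ ∫ y, Real.cosh (l * ‖fS y‖) ∂P := hmarkov
      _ ≤ K ^ M := hkey
  -- numeric bound
  have hKle : K ≤ Real.exp (2 * l ^ 2 * c ^ 4) := by
    have h := Real.cosh_le_exp_half_sq (l * (2 * c ^ 2))
    rw [show (l * (2 * c ^ 2)) ^ 2 / 2 = 2 * l ^ 2 * c ^ 4 by ring] at h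
    exact h
  have hKM : K ^ M ≤ Real.exp (2 * l ^ 2 * c ^ 4 * M) := by
    calc K ^ M ≤ (Real.exp (2 * l ^ 2 * c ^ 4)) ^ M :=
          pow_le_pow_left₀ (Real.cosh_pos _).le hKle M
      _ = Real.exp (2 * l ^ 2 * c ^ 4 * M) := by
          rw [← Real.exp_nat_mul]; congr 1; ring
  have hage : Real.exp (l * (M * ε)) / 2 ≤ a := by
    rw [hadef, Real.cosh_eq]
    have := (Real.exp_pos (-(l * ((M : ℝ) * ε)))).le
    linarith
  have hexp_eq : 2 * l ^ 2 * c ^ 4 * (M : ℝ) - l * ((M : ℝ) * ε) =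
      -((M : ℝ) * ε ^ 2) / (8 * c ^ 4) := by
    rw [hldef]
    field_simp
    ring
  have hfinal : K ^ M / a ≤ 2 * Real.exp (-((M : ℝ) * ε ^ 2) / (8 * c ^ 4)) := by
    calc K ^ M / a ≤ Real.exp (2 * l ^ 2 * c ^ 4 * M) / (Real.exp (l * (M * ε)) / 2) :=
          div_le_div₀ (Real.exp_nonneg _) hKM (by positivity) hage
      _ = 2 * Real.exp (2 * l ^ 2 * c ^ 4 * M - l * ((M : ℝ) * ε)) := by
          rw [Real.exp_sub]
          field_simp
      _ = 2 * Real.exp (-((M : ℝ) * ε ^ 2) / (8 * c ^ 4)) := by rw [hexp_eq]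
  have hPB : P B ≤ ENNReal.ofReal (2 * Real.exp (-((M : ℝ) * ε ^ 2) / (8 * c ^ 4))) := by
    rw [← ENNReal.ofReal_toReal (measure_ne_top P B)]
    exact ENNReal.ofReal_le_ofReal (hPBle.trans hfinal)
  -- assemble
  set A : Set Ω := {ω | ‖C - (M : ℝ)⁻¹ • ∑ i, Ψ (x i ω)‖ ≤ ε} with hAdef
  set A' : Set Ω := {ω | ε < ‖C - (M : ℝ)⁻¹ • ∑ i, Ψ (x i ω)‖} with hA'def
  have hunion : A ∪ A' = Set.univ := by
    ext ω
    simp only [hAdef, hA'def, Set.mem_union, Set.mem_setOf_eq, Set.mem_univ, iff_true]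
    exact le_or_gt _ _
  have hone : (1 : ENNReal) ≤ μ A + μ A' := by
    calc (1 : ENNReal) = μ Set.univ := measure_univ.symm
      _ = μ (A ∪ A') := by rw [hunion]
      _ ≤ μ A + μ A' := measure_union_le _ _
  have hA' : μ A' ≤ ENNReal.ofReal (2 * Real.exp (-((M : ℝ) * ε ^ 2) / (8 * c ^ 4))) := by
    rw [hA'def, hμB]
    exact hPB
  calc ENNReal.ofReal (1 - 2 * Real.exp (-((M : ℝ) * ε ^ 2) / (8 * c ^ 4)))
      = 1 - ENNReal.ofReal (2 * Real.exp (-((M : ℝ) * ε ^ 2) / (8 * c ^ 4))) := by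
        rw [ENNReal.ofReal_sub _ (by positivity), ENNReal.ofReal_one]
    _ ≤ μ A := by
        rw [tsub_le_iff_right]
        calc (1 : ENNReal) ≤ μ A + μ A' := hone
          _ ≤ μ A + ENNReal.ofReal (2 * Real.exp (-((M : ℝ) * ε ^ 2) / (8 * c ^ 4))) :=
              add_le_add_right hA' _
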